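/- Let F := D_t + M_x ∘ D_y − D_x² be the Fokker–Planck operator on R = ℝ[t,x,y]. Then for all i, j, r ∈ ℕ: F( t^{r+1} · (P³)^i (P²)^j 1 ) = (r+1) · t^r · (P³)^i (P²)^j 1. Equivalently, u = (r+1)^{-1} t^{r+1} (P³)^i (P²)^j 1 is a particular solution of the inhomogeneous equation F u = t^r (P³)^i (P²)^j 1. -/

import Mathlib

open MvPolynomial

noncomputable section

abbrev R3 : Type := MvPolynomial (Fin 3) ℝ

def t : R3 := X 0
def x : R3 := X 1
def y : R3 := X 2

def Dt : Module.End ℝ R3 := (pderiv (0 : Fin 3)).toLinearMap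
def Dx : Module.End ℝ R3 := (pderiv (1 : Fin 3)).toLinearMap
def Dy : Module.End ℝ R3 := (pderiv (2 : Fin 3)).toLinearMap

/-- Multiplication by a polynomial, as a linear endomorphism. -/
def M (a : R3) : Module.End ℝ R3 := LinearMap.mulLeft ℝ a

def P3 : Module.End ℝ R3 := 3 • (M (t ^ 2) * Dx) + M (t ^ 3) * Dy - 3 • M (y - t * x)
def P2 : Module.End ℝ R3 := 2 • (M t * Dx) + M (t ^ 2) * Dy + M x

/-- The Fokker–Planck operator `F := D_t + M_x D_y − D_x²`. -/
def F : Module.End ℝ R3 := Dt + M x * Dy - Dx ^ 2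

lemma pderiv_single (i j n : Fin 3) : pderiv i ((Pi.single j 1 : Fin 3 → R3) n) = 0 := by
  rcases eq_or_ne j n with rfl | h
  · simp
  · simp [Pi.single_apply, h]

lemma pd_comm (i j : Fin 3) (p : R3) :
    pderiv i (pderiv j p) = pderiv j (pderiv i p) := by
  induction p using MvPolynomial.induction_on with
  | C a => simp
  | add p q hp hq => simp [hp, hq]
  | mul_X p n hp =>
    classical
    simp only [pderiv_mul, map_add, pderiv_X, pderiv_single, hp]
    ring

lemma pderiv_two (i : Fin 3) : pderiv i (2 : R3) = 0 := by
  rw [← map_ofNat (C : ℝ →+* R3) 2, pderiv_C]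

lemma pderiv_three (i : Fin 3) : pderiv i (3 : R3) = 0 := by
  rw [← map_ofNat (C : ℝ →+* R3) 3, pderiv_C]

lemma expandF2 : F * P2 = P2 * F := by
  apply LinearMap.ext
  intro f
  simp only [F, P2, Dt, Dx, Dy, M, t, x, y, Module.End.mul_apply, LinearMap.add_apply,
    LinearMap.sub_apply, LinearMap.smul_apply, LinearMap.mulLeft_apply, pow_two,
    Derivation.coeFn_coe, map_add, map_sub, map_smul, map_nsmul, smul_eq_mul, nsmul_eq_mul,
    pderiv_mul, pderiv_X_self, Module.End.ofNat_apply, Module.End.natCast_apply, map_zero,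
    pderiv_one, pderiv_two, pderiv_three, Nat.cast_ofNat, pderiv_pow,
    pderiv_X_of_ne (show (0:Fin 3) ≠ 1 by decide),
    pderiv_X_of_ne (show (0:Fin 3) ≠ 2 by decide),
    pderiv_X_of_ne (show (1:Fin 3) ≠ 0 by decide),
    pderiv_X_of_ne (show (1:Fin 3) ≠ 2 by decide),
    pderiv_X_of_ne (show (2:Fin 3) ≠ 0 by decide),
    pderiv_X_of_ne (show (2:Fin 3) ≠ 1 by decide)]
  simp only [pd_comm 0 1, pd_comm 0 2, pd_comm 1 2]
  ring

lemma expandF3 : F * P3 = P3 * F := by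
  apply LinearMap.ext
  intro f
  simp only [F, P3, Dt, Dx, Dy, M, t, x, y, Module.End.mul_apply, LinearMap.add_apply,
    LinearMap.sub_apply, LinearMap.smul_apply, LinearMap.mulLeft_apply, pow_two,
    Derivation.coeFn_coe, map_add, map_sub, map_smul, map_nsmul, smul_eq_mul, nsmul_eq_mul,
    pderiv_mul, pderiv_X_self, Module.End.ofNat_apply, Module.End.natCast_apply, map_zero,
    pderiv_one, pderiv_two, pderiv_three, Nat.cast_ofNat, pderiv_pow,
    pderiv_X_of_ne (show (0:Fin 3) ≠ 1 by decide),
    pderiv_X_of_ne (show (0:Fin 3) ≠ 2 by decide),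
    pderiv_X_of_ne (show (1:Fin 3) ≠ 0 by decide),
    pderiv_X_of_ne (show (1:Fin 3) ≠ 2 by decide),
    pderiv_X_of_ne (show (2:Fin 3) ≠ 0 by decide),
    pderiv_X_of_ne (show (2:Fin 3) ≠ 1 by decide)]
  simp only [pd_comm 0 1, pd_comm 0 2, pd_comm 1 2]
  ring

lemma F_apply (p : R3) :
    F p = pderiv 0 p + X 1 * pderiv 2 p - pderiv 1 (pderiv 1 p) := by
  simp [F, Dt, Dx, Dy, M, x, pow_two, Module.End.mul_apply]

lemma Fw (i j : ℕ) : F ((P3 ^ i * P2 ^ j) 1) = 0 := by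
  have h3 : Commute F P3 := expandF3
  have h2 : Commute F P2 := expandF2
  have hc : Commute F (P3 ^ i * P2 ^ j) := (h3.pow_right i).mul_right (h2.pow_right j)
  have h : F ((P3 ^ i * P2 ^ j) 1) = (P3 ^ i * P2 ^ j) (F 1) := by
    rw [← Module.End.mul_apply, ← Module.End.mul_apply, hc.eq]
  rw [h]
  have hF1 : F 1 = 0 := by rw [F_apply]; simp
  rw [hF1, map_zero]

/-- For all `i, j, r`,
`F(t^{r+1}·(P³)^i(P²)^j 1) = (r+1)·t^r·(P³)^i(P²)^j 1`; i.e.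
`u = (r+1)⁻¹ t^{r+1} (P³)^i (P²)^j 1` is a particular solution of the inhomogeneous
equation `F u = t^r (P³)^i (P²)^j 1`. -/
theorem stmt9 (i j r : ℕ) :
    F (t ^ (r + 1) * (P3 ^ i * P2 ^ j) 1)
      = ((r : ℝ) + 1) • (t ^ r * (P3 ^ i * P2 ^ j) 1) := by
  have h0 := Fw i j
  rw [F_apply] at h0 ⊢
  generalize (P3 ^ i * P2 ^ j) 1 = w at h0 ⊢
  simp only [t, pderiv_mul, pderiv_pow, pderiv_X_self,
    pderiv_X_of_ne (show (0:Fin 3) ≠ 1 by decide),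
    pderiv_X_of_ne (show (0:Fin 3) ≠ 2 by decide),
    map_zero, mul_zero, zero_mul, mul_one, add_zero, zero_add, smul_eq_C_mul,
    map_add, map_mul, C_add, C_1, map_natCast]
  push_cast
  linear_combination (X 0 ^ (r + 1) : R3) * h0
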